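/- Let n ≥ 3 and let P be the set of isomorphisms p between finite induced subgraphs of the universal K_n-free graph H(n) such that dom(p) ∩ ran(p) = ∅ and there are no edges between dom(p) and ran(p). Then for f ∈ Aut(H(n)), the set of g ∈ I(H(n)) such that ⟨f,g⟩ is dense in Aut(H(n)) equals the intersection over all p ∈ P of the sets {g ∈ I(H(n)) : some element of ⟨f,g⟩ extends p}. -/

import Mathlib

/-- The pointwise-convergence (permutation) topology on the automorphism group. -/
def autTop {V : Type*} (G : SimpleGraph V) : TopologicalSpace (G ≃g G) :=
  TopologicalSpace.induced (fun g (x : V) => g x)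
    (@Pi.topologicalSpace V (fun _ => V) (fun _ => ⊥))

/-- The Alice's restaurant property for K_n-free graphs. -/
def AliceProp {V : Type*} (G : SimpleGraph V) (n : ℕ) : Prop :=
  ∀ U W : Finset V, Disjoint U W →
    (G.induce (↑U : Set V)).CliqueFree (n - 1) →
    ∃ w : V, w ∉ U ∧ w ∉ W ∧ (∀ u ∈ U, G.Adj w u) ∧ ∀ v ∈ W, ¬ G.Adj w v


section Aux
open scoped Classical
variable {V : Type*} {G : SimpleGraph V} {n : ℕ}

/-- `p` is the graph of a finite partial isomorphism of `G`. -/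
def IsPI (G : SimpleGraph V) (p : Finset (V × V)) : Prop :=
  (∀ a ∈ p, ∀ b ∈ p, a.1 = b.1 ↔ a.2 = b.2) ∧
  (∀ a ∈ p, ∀ b ∈ p, (G.Adj a.1 b.1 ↔ G.Adj a.2 b.2))

lemma isPI_empty : IsPI G (∅ : Finset (V × V)) :=
  ⟨fun a ha => absurd ha (Finset.notMem_empty a), fun a ha => absurd ha (Finset.notMem_empty a)⟩

lemma IsPI.swap {p : Finset (V × V)} (hp : IsPI G p) : IsPI G (p.image Prod.swap) := by
  constructor <;> intro a ha b hb <;>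
  · simp only [Finset.mem_image] at ha hb
    obtain ⟨a', ha', rfl⟩ := ha
    obtain ⟨b', hb', rfl⟩ := hb
    first
      | exact (hp.1 a' ha' b' hb').symm
      | exact (hp.2 a' ha' b' hb').symm

lemma forth (hn : 3 ≤ n) (hfree : G.CliqueFree n) (halice : AliceProp G n)
    {p : Finset (V × V)} (hp : IsPI G p) (v : V) (A : Finset V)
    (hA : ∀ a ∈ A, ∀ r ∈ p, a ≠ r.2) (hv : ∀ r ∈ p, v ≠ r.1) :
    ∃ w, IsPI G (insert (v, w) p) ∧ w ∉ A ∧ ∀ a ∈ A, ¬ G.Adj w a := by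
  classical
  set U : Finset V := (p.filter (fun r => G.Adj v r.1)).image Prod.snd with hU
  set W : Finset V := (p.image Prod.snd \ U) ∪ A with hW
  have hUmem : ∀ w, w ∈ U ↔ ∃ r ∈ p, G.Adj v r.1 ∧ r.2 = w := by
    intro w
    simp only [hU, Finset.mem_image, Finset.mem_filter]
    constructor
    · rintro ⟨r, ⟨hr, hadj⟩, rfl⟩; exact ⟨r, hr, hadj, rfl⟩
    · rintro ⟨r, hr, hadj, rfl⟩; exact ⟨r, ⟨hr, hadj⟩, rfl⟩
  have hdisj : Disjoint U W := by
    rw [Finset.disjoint_left]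
    intro a haU haW
    rcases Finset.mem_union.1 haW with h | h
    · exact (Finset.mem_sdiff.1 h).2 haU
    · obtain ⟨r, hr, _, hr2⟩ := (hUmem a).1 haU
      exact hA a h r hr hr2.symm
  have hcf : (G.induce (↑U : Set V)).CliqueFree (n - 1) := by
    intro t ht
    have hmem : ∀ u : (↑U : Set V), ∃ r, r ∈ p ∧ G.Adj v r.1 ∧ r.2 = (u : V) := by
      intro u
      obtain ⟨r, hr, hadj, hr2⟩ := (hUmem u).1 (by exact_mod_cast u.2)
      exact ⟨r, hr, hadj, hr2⟩
    choose c hc1 hc2 hc3 using hmem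
    have hinj : Set.InjOn (fun u : (↑U : Set V) => (c u).1) ↑t := by
      intro u₁ _ u₂ _ h
      have := (hp.1 (c u₁) (hc1 u₁) (c u₂) (hc1 u₂)).1 h
      apply Subtype.ext
      rw [← hc3 u₁, ← hc3 u₂, this]
    have hclique : G.IsNClique n (insert v (t.image (fun u => (c u).1))) := by
      constructor
      · rw [Finset.coe_insert]
        apply Set.Pairwise.insert
        · intro x hx y hy hxy
          simp only [Finset.coe_image, Set.mem_image, Finset.mem_coe] at hx hy
          obtain ⟨u₁, hu₁, rfl⟩ := hx
          obtain ⟨u₂, hu₂, rfl⟩ := hy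
          have hne : u₁ ≠ u₂ := by rintro rfl; exact hxy rfl
          have hadj : (G.induce (↑U : Set V)).Adj u₁ u₂ :=
            ht.1 (Finset.mem_coe.2 hu₁) (Finset.mem_coe.2 hu₂) hne
          have : G.Adj (u₁ : V) (u₂ : V) := hadj
          rw [← hc3 u₁, ← hc3 u₂] at this
          exact (hp.2 (c u₁) (hc1 u₁) (c u₂) (hc1 u₂)).2 this
        · intro x hx _
          simp only [Finset.coe_image, Set.mem_image, Finset.mem_coe] at hx
          obtain ⟨u, hu, rfl⟩ := hx
          exact ⟨hc2 u, (hc2 u).symm⟩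
      · have hvnot : v ∉ t.image (fun u => (c u).1) := by
          intro hv'
          simp only [Finset.mem_image] at hv'
          obtain ⟨u, hu, hueq⟩ := hv'
          exact G.irrefl (hueq ▸ hc2 u)
        rw [Finset.card_insert_of_notMem hvnot,
          Finset.card_image_of_injOn hinj, ht.2]
        omega
    exact hfree _ hclique
  obtain ⟨w, hwU, hwW, hadjU, hnadjW⟩ := halice U W hdisj hcf
  have hsnd : ∀ r ∈ p, (G.Adj v r.1 ↔ G.Adj w r.2) ∧ w ≠ r.2 := by
    intro r hr
    by_cases hadj : G.Adj v r.1
    · have hrU : r.2 ∈ U := (hUmem r.2).2 ⟨r, hr, hadj, rfl⟩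
      refine ⟨⟨fun _ => hadjU _ hrU, fun _ => hadj⟩, ?_⟩
      rintro rfl; exact hwU hrU
    · have hrW : r.2 ∈ W := by
        apply Finset.mem_union_left
        rw [Finset.mem_sdiff]
        refine ⟨Finset.mem_image_of_mem _ hr, fun hrU => ?_⟩
        obtain ⟨r', hr', hadj', hr2'⟩ := (hUmem r.2).1 hrU
        have : r'.1 = r.1 := (hp.1 r' hr' r hr).2 hr2'
        exact hadj (this ▸ hadj')
      refine ⟨⟨fun h => absurd h hadj, fun h => absurd h (hnadjW _ hrW)⟩, ?_⟩
      rintro rfl; exact hwW hrW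
  refine ⟨w, ⟨?_, ?_⟩, fun hwA => hwW (Finset.mem_union_right _ hwA),
    fun a haA => hnadjW a (Finset.mem_union_right _ haA)⟩
  · intro a ha b hb
    rcases Finset.mem_insert.1 ha with rfl | ha <;>
      rcases Finset.mem_insert.1 hb with rfl | hb
    · simp
    · exact ⟨fun h => absurd h (hv b hb), fun h => absurd h (hsnd b hb).2⟩
    · exact ⟨fun h => absurd h.symm (hv a ha), fun h => absurd h.symm (hsnd a ha).2⟩
    · exact hp.1 a ha b hb
  · intro a ha b hb
    rcases Finset.mem_insert.1 ha with rfl | ha <;>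
      rcases Finset.mem_insert.1 hb with rfl | hb
    · simp
    · exact (hsnd b hb).1
    · rw [SimpleGraph.adj_comm, @SimpleGraph.adj_comm _ G a.2]
      exact (hsnd a ha).1
    · exact hp.2 a ha b hb

lemma step (hn : 3 ≤ n) (hfree : G.CliqueFree n) (halice : AliceProp G n)
    {p : Finset (V × V)} (hp : IsPI G p) (v : V) :
    ∃ p' : Finset (V × V), p ⊆ p' ∧ IsPI G p' ∧ (∃ w, (v, w) ∈ p') ∧ ∃ u, (u, v) ∈ p' := by
  classical
  obtain ⟨p₁, hsub₁, hp₁, hdom₁⟩ : ∃ p₁, p ⊆ p₁ ∧ IsPI G p₁ ∧ ∃ w, (v, w) ∈ p₁ := by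
    by_cases h : ∃ w, (v, w) ∈ p
    · exact ⟨p, Finset.Subset.refl p, hp, h⟩
    · obtain ⟨w, hw, -, -⟩ := forth hn hfree halice hp v ∅
        (fun a ha => absurd ha (Finset.notMem_empty a))
        (fun r hr he => h ⟨r.2, by rwa [he, Prod.mk.eta]⟩)
      exact ⟨insert (v, w) p, Finset.subset_insert _ _, hw, w, Finset.mem_insert_self _ _⟩
  by_cases h : ∃ u, (u, v) ∈ p₁
  · exact ⟨p₁, hsub₁, hp₁, hdom₁, h⟩
  · obtain ⟨u, hu, -, -⟩ := forth hn hfree halice hp₁.swap v ∅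
      (fun a ha => absurd ha (Finset.notMem_empty a))
      (fun r hr he => by
        simp only [Finset.mem_image] at hr
        obtain ⟨r', hr', rfl⟩ := hr
        exact h ⟨r'.1, by rw [Prod.fst_swap] at he; rwa [he, Prod.mk.eta]⟩)
    have hswap : IsPI G (insert (u, v) p₁) := by
      have := hu.swap
      rwa [Finset.image_insert, Finset.image_image, Prod.swap_prod_mk,
        show (Prod.swap ∘ Prod.swap : V × V → V × V) = id from funext Prod.swap_swap,
        Finset.image_id] at this
    obtain ⟨w, hw⟩ := hdom₁
    exact ⟨insert (u, v) p₁, fun x hx => Finset.mem_insert_of_mem (hsub₁ hx), hswap,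
      ⟨w, Finset.mem_insert_of_mem hw⟩, u, Finset.mem_insert_self _ _⟩

lemma exists_aut_extend [Countable V] [Infinite V]
    (hn : 3 ≤ n) (hfree : G.CliqueFree n) (halice : AliceProp G n)
    {p₀ : Finset (V × V)} (h₀ : IsPI G p₀) :
    ∃ g : G ≃g G, ∀ r ∈ p₀, g r.1 = r.2 := by
  classical
  obtain ⟨e, he⟩ := exists_surjective_nat V
  choose next hsub hpi hdom hran using
    fun (pp : {p : Finset (V × V) // IsPI G p}) (v : V) => step hn hfree halice pp.2 v
  let P : ℕ → {p : Finset (V × V) // IsPI G p} :=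
    fun k => Nat.rec ⟨p₀, h₀⟩ (fun k pp => ⟨next pp (e k), hpi pp (e k)⟩) k
  have hPs : ∀ k, (P k).1 ⊆ (P (k + 1)).1 := fun k => hsub (P k) (e k)
  have hmono : ∀ k m, k ≤ m → (P k).1 ⊆ (P m).1 := by
    intro k m hkm
    induction m with
    | zero => rw [Nat.le_zero.1 hkm]
    | succ m ih =>
      rcases Nat.lt_or_ge k (m + 1) with h | h
      · exact (ih (Nat.lt_succ_iff.1 h)).trans (hPs m)
      · rw [Nat.le_antisymm hkm h]
  have key : ∀ {a b a' b' : V} {k m : ℕ}, (a, b) ∈ (P k).1 → (a', b') ∈ (P m).1 →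
      ((a = a' ↔ b = b') ∧ (G.Adj a a' ↔ G.Adj b b')) := by
    intro a b a' b' k m h1 h2
    have h1' : (a, b) ∈ (P (max k m)).1 := hmono k _ (le_max_left k m) h1
    have h2' : (a', b') ∈ (P (max k m)).1 := hmono m _ (le_max_right k m) h2
    exact ⟨(P (max k m)).2.1 _ h1' _ h2', (P (max k m)).2.2 _ h1' _ h2'⟩
  have total : ∀ v : V, ∃ w, ∃ k, (v, w) ∈ (P k).1 := by
    intro v
    obtain ⟨k, rfl⟩ := he v
    obtain ⟨w, hw⟩ := hdom (P k) (e k)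
    exact ⟨w, k + 1, hw⟩
  have cototal : ∀ w : V, ∃ v, ∃ k, (v, w) ∈ (P k).1 := by
    intro w
    obtain ⟨k, rfl⟩ := he w
    obtain ⟨v, hv⟩ := hran (P k) (e k)
    exact ⟨v, k + 1, hv⟩
  choose Fn hFn using total
  choose Gn hGn using cototal
  have hli : Function.LeftInverse Gn Fn := by
    intro v
    obtain ⟨k, hk⟩ := hFn v
    obtain ⟨m, hm⟩ := hGn (Fn v)
    exact (key hm hk).1.2 rfl
  have hri : Function.RightInverse Gn Fn := by
    intro w
    obtain ⟨k, hk⟩ := hFn (Gn w)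
    obtain ⟨m, hm⟩ := hGn w
    exact (key hk hm).1.1 rfl
  refine ⟨⟨⟨Fn, Gn, hli, hri⟩, ?_⟩, ?_⟩
  · intro a b
    obtain ⟨k, hk⟩ := hFn a
    obtain ⟨m, hm⟩ := hFn b
    exact (key hk hm).2.symm
  · intro r hr
    obtain ⟨k, hk⟩ := hFn r.1
    have h0 : (r.1, r.2) ∈ (P 0).1 := hr
    exact (key (k := k) (m := 0) hk h0).1.1 rfl
lemma exists_copy (hn : 3 ≤ n) (hfree : G.CliqueFree n) (halice : AliceProp G n)
    (F T : Finset V) (hFT : F ⊆ T) :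
    ∃ q : Finset (V × V), IsPI G q ∧ (∀ v ∈ F, ∃ w, (v, w) ∈ q) ∧
      (∀ r ∈ q, r.1 ∈ F) ∧ ∀ r ∈ q, r.2 ∉ T ∧ ∀ t ∈ T, ¬ G.Adj r.2 t := by
  classical
  induction F using Finset.induction_on with
  | empty =>
    exact ⟨∅, isPI_empty, fun v hv => absurd hv (Finset.notMem_empty v),
      fun r hr => absurd hr (Finset.notMem_empty r),
      fun r hr => absurd hr (Finset.notMem_empty r)⟩
  | insert _ _ hvF ih =>
    rename_i v F'
    obtain ⟨q', hq', hdom', hfst', hrng'⟩ := ih ((Finset.subset_insert _ _).trans hFT)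
    obtain ⟨w, hw, hwT, hwadj⟩ := forth hn hfree halice hq' v T
      (fun a ha r hr => fun he => (hrng' r hr).1 (he ▸ ha))
      (fun r hr => fun he => hvF (he ▸ hfst' r hr))
    refine ⟨insert (v, w) q', hw, ?_, ?_, ?_⟩
    · intro z hz
      rcases Finset.mem_insert.1 hz with rfl | hz
      · exact ⟨w, Finset.mem_insert_self _ _⟩
      · obtain ⟨w', hw'⟩ := hdom' z hz
        exact ⟨w', Finset.mem_insert_of_mem hw'⟩
    · intro r hr
      rcases Finset.mem_insert.1 hr with rfl | hr
      · exact Finset.mem_insert_self _ _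
      · exact Finset.mem_insert_of_mem (hfst' r hr)
    · intro r hr
      rcases Finset.mem_insert.1 hr with rfl | hr
      · exact ⟨hwT, hwadj⟩
      · exact hrng' r hr

lemma infinite_of_alice (hn : 3 ≤ n) (halice : AliceProp G n) : Infinite V := by
  by_contra hinf
  rw [not_infinite_iff_finite] at hinf
  haveI := Fintype.ofFinite V
  have hcf : (G.induce (↑(∅ : Finset V) : Set V)).CliqueFree (n - 1) := by
    intro t ht
    have h2 := ht.2
    have : t = ∅ := by
      rw [Finset.eq_empty_iff_forall_notMem]
      rintro ⟨a, ha⟩ -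
      simp only [Finset.coe_empty, Set.mem_empty_iff_false] at ha
    rw [this, Finset.card_empty] at h2
    omega
  obtain ⟨w, -, hw, -, -⟩ := halice ∅ Finset.univ (Finset.disjoint_empty_left _) hcf
  exact hw (Finset.mem_univ w)

lemma closure_adj (f g : G ≃g G) {σ : Equiv.Perm V}
    (hσ : σ ∈ Subgroup.closure ({f.toEquiv, g.toEquiv} : Set (Equiv.Perm V))) :
    ∀ a b : V, G.Adj (σ a) (σ b) ↔ G.Adj a b := by
  let A : Subgroup (Equiv.Perm V) :=
    { carrier := {σ : Equiv.Perm V | ∀ a b : V, G.Adj (σ a) (σ b) ↔ G.Adj a b}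
      one_mem' := fun a b => Iff.rfl
      mul_mem' := by
        intro x y hx hy a b
        simp only [Set.mem_setOf_eq] at hx hy ⊢
        rw [Equiv.Perm.mul_apply, Equiv.Perm.mul_apply, hx, hy]
      inv_mem' := by
        intro x hx a b
        simp only [Set.mem_setOf_eq] at hx ⊢
        conv_rhs => rw [← Equiv.apply_symm_apply x a, ← Equiv.apply_symm_apply x b]
        rw [hx]
        rfl }
  have hle : Subgroup.closure ({f.toEquiv, g.toEquiv} : Set (Equiv.Perm V)) ≤ A := by
    apply (Subgroup.closure_le A).2
    rintro σ (rfl | rfl)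
    · exact fun a b => f.map_rel_iff
    · exact fun a b => g.map_rel_iff
  exact hle hσ

lemma dense_char (S : Set (G ≃g G)) :
    (letI := autTop G; Dense S) ↔
      ∀ (x : G ≃g G) (F : Finset V), ∃ h ∈ S, ∀ v ∈ F, h v = x v := by
  letI tV : TopologicalSpace V := ⊥
  haveI : DiscreteTopology V := ⟨rfl⟩
  letI := autTop G
  have hcont : Continuous (fun (g : G ≃g G) (x : V) => g x) := continuous_induced_dom
  constructor
  · intro hd x F
    have hO : IsOpen (Set.pi (↑F : Set V) (fun i => ({x i} : Set V))) :=
      isOpen_set_pi F.finite_toSet (fun i _ => isOpen_discrete _)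
    have hU : IsOpen ((fun (g : G ≃g G) (x : V) => g x) ⁻¹'
        Set.pi (↑F : Set V) (fun i => ({x i} : Set V))) := hO.preimage hcont
    have hne : x ∈ (fun (g : G ≃g G) (x : V) => g x) ⁻¹'
        Set.pi (↑F : Set V) (fun i => ({x i} : Set V)) := by
      intro i _; rfl
    obtain ⟨h, hhS, hhU⟩ := hd.exists_mem_open hU ⟨x, hne⟩
    exact ⟨h, hhS, fun v hv => hhU v hv⟩
  · intro H
    rw [dense_iff_inter_open]
    rintro U hU ⟨x, hx⟩
    obtain ⟨O, hO, rfl⟩ := isOpen_induced_iff.1 hU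
    obtain ⟨I, u, hu, hsub⟩ := isOpen_pi_iff.1 hO _ hx
    obtain ⟨h, hhS, hh⟩ := H x I
    refine ⟨h, ?_, hhS⟩
    apply hsub
    intro i hi
    show h i ∈ u i
    rw [hh i hi]
    exact (hu i hi).2
end Aux

theorem stmt_19 {V : Type*} [Countable V] (n : ℕ) (hn : 3 ≤ n) (G : SimpleGraph V)
    (hfree : G.CliqueFree n) (halice : AliceProp G n) (f : G ≃g G) :
    letI := autTop G
    {g : G ≃g G |
        (∀ v : V, {w : V | Equiv.Perm.SameCycle g.toEquiv v w}.Infinite) ∧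
        Dense {h : G ≃g G | h.toEquiv ∈ Subgroup.closure
          ({f.toEquiv, g.toEquiv} : Set (Equiv.Perm V))}} =
      {g : G ≃g G |
        (∀ v : V, {w : V | Equiv.Perm.SameCycle g.toEquiv v w}.Infinite) ∧
        ∀ (s : Finset V) (φ : V → V),
          Set.InjOn φ ↑s →
          (∀ a ∈ s, ∀ b ∈ s, (G.Adj a b ↔ G.Adj (φ a) (φ b))) →
          (∃ g₀ : G ≃g G, ∀ z ∈ s, g₀ z = φ z) →
          Disjoint (↑s : Set V) (φ '' ↑s) →
          (∀ a ∈ s, ∀ b ∈ s, ¬ G.Adj a (φ b)) →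
          ∃ h ∈ Subgroup.closure ({f.toEquiv, g.toEquiv} : Set (Equiv.Perm V)),
            ∀ z ∈ s, h z = φ z} := by
  classical
  haveI : Infinite V := infinite_of_alice hn halice
  ext g
  simp only [Set.mem_setOf_eq]
  constructor
  · rintro ⟨horb, hdense⟩
    refine ⟨horb, ?_⟩
    intro s φ hinj hadj hex hdisj hnoedge
    obtain ⟨g₀, hg₀⟩ := hex
    obtain ⟨h, hhS, hh⟩ := (dense_char _).1 hdense g₀ s
    refine ⟨h.toEquiv, hhS, fun z hz => ?_⟩
    rw [show h.toEquiv z = h z from rfl, hh z hz, hg₀ z hz]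
  · rintro ⟨horb, hcond⟩
    refine ⟨horb, ?_⟩
    rw [dense_char]
    intro x F
    set T : Finset V := F ∪ F.image x with hT
    obtain ⟨q, hq, hdom, hfst, hrng⟩ :=
      exists_copy hn hfree halice F T Finset.subset_union_left
    let ψ : V → V := fun v => if h : ∃ w, (v, w) ∈ q then h.choose else v
    have hψ : ∀ v ∈ F, (v, ψ v) ∈ q := by
      intro v hv
      have h : ∃ w, (v, w) ∈ q := hdom v hv
      simp only [ψ, dif_pos h]
      exact h.choose_spec
    have hFT : ∀ v ∈ F, v ∈ T := fun v hv => Finset.mem_union_left _ hv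
    have hxT : ∀ v ∈ F, x v ∈ T :=
      fun v hv => Finset.mem_union_right _ (Finset.mem_image_of_mem _ hv)
    -- first application of the hypothesis
    have hinj1 : Set.InjOn ψ ↑F := by
      intro a ha b hb h
      exact (hq.1 (a, ψ a) (hψ a ha) (b, ψ b) (hψ b hb)).2 h
    have hadj1 : ∀ a ∈ F, ∀ b ∈ F, (G.Adj a b ↔ G.Adj (ψ a) (ψ b)) :=
      fun a ha b hb => hq.2 (a, ψ a) (hψ a ha) (b, ψ b) (hψ b hb)
    have hex1 : ∃ g₀ : G ≃g G, ∀ z ∈ F, g₀ z = ψ z := by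
      obtain ⟨g₀, hg₀⟩ := exists_aut_extend hn hfree halice hq
      exact ⟨g₀, fun z hz => hg₀ (z, ψ z) (hψ z hz)⟩
    obtain ⟨g₀, hg₀⟩ := hex1
    have hdisj1 : Disjoint (↑F : Set V) (ψ '' ↑F) := by
      rw [Set.disjoint_left]
      rintro a ha ⟨b, hb, rfl⟩
      exact (hrng (b, ψ b) (hψ b hb)).1 (hFT _ ha)
    have hne1 : ∀ a ∈ F, ∀ b ∈ F, ¬ G.Adj a (ψ b) :=
      fun a ha b hb hadj' => (hrng (b, ψ b) (hψ b hb)).2 a (hFT a ha) hadj'.symm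
    obtain ⟨h₁, hh₁c, hh₁⟩ := hcond F ψ hinj1 hadj1 ⟨g₀, hg₀⟩ hdisj1 hne1
    -- second application of the hypothesis
    let ρ : V → V := fun w => if h : ∃ v, (v, w) ∈ q then h.choose else w
    have hρ : ∀ v ∈ F, ρ (ψ v) = v := by
      intro v hv
      have hex : ∃ u, (u, ψ v) ∈ q := ⟨v, hψ v hv⟩
      simp only [ρ, dif_pos hex]
      exact (hq.1 _ hex.choose_spec _ (hψ v hv)).2 rfl
    let φ₂ : V → V := fun w => x (ρ w)
    have hφ₂ : ∀ v ∈ F, φ₂ (ψ v) = x v := by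
      intro v hv
      show x (ρ (ψ v)) = x v
      rw [hρ v hv]
    have hmem2 : ∀ w ∈ F.image ψ, ∃ v ∈ F, ψ v = w := by
      intro w hw
      obtain ⟨v, hv, rfl⟩ := Finset.mem_image.1 hw
      exact ⟨v, hv, rfl⟩
    have hinj2 : Set.InjOn φ₂ ↑(F.image ψ) := by
      intro a ha b hb h
      obtain ⟨v₁, hv₁, rfl⟩ := hmem2 a ha
      obtain ⟨v₂, hv₂, rfl⟩ := hmem2 b hb
      rw [hφ₂ v₁ hv₁, hφ₂ v₂ hv₂] at h
      rw [x.toEquiv.injective h]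
    have hadj2 : ∀ a ∈ F.image ψ, ∀ b ∈ F.image ψ, (G.Adj a b ↔ G.Adj (φ₂ a) (φ₂ b)) := by
      intro a ha b hb
      obtain ⟨v₁, hv₁, rfl⟩ := hmem2 a ha
      obtain ⟨v₂, hv₂, rfl⟩ := hmem2 b hb
      rw [hφ₂ v₁ hv₁, hφ₂ v₂ hv₂, ← hadj1 v₁ hv₁ v₂ hv₂]
      exact Iff.trans (x.map_rel_iff).symm (Iff.rfl)
    have hex2 : ∃ g₂ : G ≃g G, ∀ z ∈ F.image ψ, g₂ z = φ₂ z := by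
      refine ⟨g₀.symm.trans x, ?_⟩
      intro z hz
      obtain ⟨v, hv, rfl⟩ := hmem2 z hz
      have : g₀.symm (ψ v) = v := by
        rw [← hg₀ v hv]
        exact g₀.toEquiv.symm_apply_apply v
      show x (g₀.symm (ψ v)) = φ₂ (ψ v)
      rw [this, hφ₂ v hv]
    have hdisj2 : Disjoint (↑(F.image ψ) : Set V) (φ₂ '' ↑(F.image ψ)) := by
      rw [Set.disjoint_left]
      rintro a ha ⟨b, hb, rfl⟩
      obtain ⟨v₂, hv₂, rfl⟩ := hmem2 b hb
      rw [hφ₂ v₂ hv₂] at ha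
      obtain ⟨v₃, hv₃, h3⟩ := hmem2 _ ha
      refine (hrng (v₃, ψ v₃) (hψ v₃ hv₃)).1 ?_
      show ψ v₃ ∈ T
      rw [h3]
      exact hxT v₂ hv₂
    have hne2 : ∀ a ∈ F.image ψ, ∀ b ∈ F.image ψ, ¬ G.Adj a (φ₂ b) := by
      intro a ha b hb hadj'
      obtain ⟨v₁, hv₁, rfl⟩ := hmem2 a ha
      obtain ⟨v₂, hv₂, rfl⟩ := hmem2 b hb
      rw [hφ₂ v₂ hv₂] at hadj'
      exact (hrng (v₁, ψ v₁) (hψ v₁ hv₁)).2 _ (hxT v₂ hv₂) hadj'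
    obtain ⟨h₂, hh₂c, hh₂⟩ := hcond (F.image ψ) φ₂ hinj2 hadj2 hex2 hdisj2 hne2
    have hσ : (h₂ * h₁) ∈ Subgroup.closure ({f.toEquiv, g.toEquiv} : Set (Equiv.Perm V)) :=
      mul_mem hh₂c hh₁c
    have hadjσ := closure_adj f g hσ
    refine ⟨{ toEquiv := h₂ * h₁, map_rel_iff' := fun {a b} => hadjσ a b }, hσ, ?_⟩
    intro v hv
    show (h₂ * h₁) v = x v
    rw [Equiv.Perm.mul_apply, hh₁ v hv, hh₂ (ψ v) (Finset.mem_image_of_mem ψ hv), hφ₂ v hv]
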